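/- arXiv:2109.03932 — 2 statements merged into one kernel-verified Lean document; each statement's English description precedes it below -/
import Mathlib

section
/- (Proposition 2.1) Assume Condition 5. Then the stopped estimating functions are unbiased, i.e. E[g_{n,1}(θ₀)] = 0 and E[g_{n,2}(η₀)] = 0 for every n ≥ 1, and moreover n^{−1} g_{n,k}(η₀) → 0 almost surely as n → ∞, for k = 1, 2. -/
open MeasureTheory Filter Topology ENNReal

/-- Stopped estimating function `g_{n,1}(θ₀) = ∑_{i=1}^n ∑_{j=1}^{τ_i} f_{ij} Z_{ij}`. -/
noncomputable def gn1 {Ω : Type*} {p : ℕ} (f : ℕ → ℕ → Ω → EuclideanSpace ℝ (Fin p))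
    (Z : ℕ → ℕ → Ω → ℝ) (τ : ℕ → Ω → ℕ) (n : ℕ) (ω : Ω) : EuclideanSpace ℝ (Fin p) :=
  ∑ i ∈ Finset.Icc 1 n, ∑ j ∈ Finset.Icc 1 (τ i ω), Z i j ω • f i j ω

/-- Stopped estimating function `g_{n,2}(η₀) = ∑_{i=1}^n ∑_{j=1}^{τ_i} b_{ij}(Z_{ij}² − σ₀²)`. -/
noncomputable def gn2 {Ω : Type*} (b : ℕ → ℕ → Ω → ℝ)
    (Z : ℕ → ℕ → Ω → ℝ) (σ0 : ℝ) (τ : ℕ → Ω → ℕ) (n : ℕ) (ω : Ω) : ℝ :=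
  ∑ i ∈ Finset.Icc 1 n, ∑ j ∈ Finset.Icc 1 (τ i ω), b i j ω * ((Z i j ω) ^ 2 - σ0 ^ 2)

section Helpers

variable {Ω : Type*}

lemma measurable_apply_nat {α β : Type*} [MeasurableSpace α] [MeasurableSpace β]
    {H : ℕ → α → β} (hH : ∀ k, Measurable (H k)) {T : α → ℕ} (hT : Measurable T) :
    Measurable fun x => H (T x) x := by
  have h : Measurable fun q : α × ℕ => H q.2 q.1 :=
    measurable_from_prod_countable_left fun n => hH n
  exact h.comp (measurable_id.prodMk hT)

lemma measurable_nat_sInf {α : Type*} [MeasurableSpace α] {q : ℕ → α → Prop}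
    (hq : ∀ n, MeasurableSet {x | q n x}) :
    Measurable fun x => sInf {n | q n x} := by
  classical
  have h : ∀ x, ∃ n, q n x ∨ ∀ m, ¬ q m x := by
    intro x
    by_cases hx : ∃ m, q m x
    · obtain ⟨m, hm⟩ := hx; exact ⟨m, Or.inl hm⟩
    · exact ⟨0, Or.inr fun m hm => hx ⟨m, hm⟩⟩
  have heq : ∀ x, sInf {n | q n x} = Nat.find (h x) := by
    intro x
    by_cases hx : ∃ m, q m x
    · obtain ⟨m, hm⟩ := hx
      have hfind : q (Nat.find (h x)) x := by
        rcases Nat.find_spec (h x) with h1 | h2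
        · exact h1
        · exact absurd hm (h2 m)
      refine le_antisymm (Nat.sInf_le hfind) (Nat.find_le ?_)
      exact Or.inl (Nat.sInf_mem (⟨m, hm⟩ : Set.Nonempty {n | q n x}))
    · have hempty : {n | q n x} = ∅ := by
        ext n; simp only [Set.mem_setOf_eq, Set.mem_empty_iff_false, iff_false]
        exact fun hn => hx ⟨n, hn⟩
      rw [hempty, Nat.sInf_empty]
      symm
      rw [Nat.find_eq_zero]
      exact Or.inr fun m hm => hx ⟨m, hm⟩
  have : (fun x => sInf {n | q n x}) = fun x => Nat.find (h x) := funext heq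
  rw [this]
  refine measurable_find h fun k => ?_
  have : {x | q k x ∨ ∀ m, ¬ q m x} = {x | q k x} ∪ ⋂ m, {x | q m x}ᶜ := by
    ext y; simp [Set.mem_iInter]
  exact this ▸ (hq k).union (MeasurableSet.iInter fun m => (hq m).compl)

lemma measurable_stopped_sum {E : Type*} [MeasurableSpace Ω] [NormedAddCommGroup E]
    [MeasurableSpace E] [BorelSpace E] [SecondCountableTopology E]
    {u : ℕ → Ω → E} (hu : ∀ j, 1 ≤ j → Measurable (u j)) {τ : Ω → ℕ} (hτ : Measurable τ) :
    Measurable fun ω => ∑ j ∈ Finset.Icc 1 (τ ω), u j ω := by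
  refine measurable_apply_nat (H := fun k ω => ∑ j ∈ Finset.Icc 1 k, u j ω) (fun k => ?_) hτ
  exact Finset.measurable_sum _ fun j hj => hu j (Finset.mem_Icc.mp hj).1

lemma integral_mul_condexp_zero {m0 : MeasurableSpace Ω} {G : MeasurableSpace Ω}
    (hle : G ≤ m0) (P : @Measure Ω m0) [IsProbabilityMeasure P] {g ζ : Ω → ℝ}
    (hg : StronglyMeasurable[G] g) (hζ : Integrable ζ P)
    (hgζ : Integrable (fun ω => g ω * ζ ω) P)
    (hcond : P[ζ|G] =ᵐ[P] fun _ => 0) :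
    ∫ ω, g ω * ζ ω ∂P = 0 := by
  have h1 : ∫ ω, g ω * ζ ω ∂P = ∫ ω, (P[fun ω => g ω * ζ ω|G]) ω ∂P :=
    (integral_condExp (μ := P) (f := fun ω => g ω * ζ ω) hle).symm
  have h2 : P[fun ω => g ω * ζ ω|G] =ᵐ[P] fun ω => g ω * (P[ζ|G]) ω := by
    have := condExp_mul_of_stronglyMeasurable_left (μ := P) hg (f := g) (g := ζ) hgζ hζ
    exact this
  have h3 : (fun ω => g ω * (P[ζ|G]) ω) =ᵐ[P] fun _ => (0 : ℝ) :=
    hcond.mono fun ω hω => by simp [hω]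
  rw [h1, integral_congr_ae (h2.trans h3), integral_zero]

lemma abs_coord_le_norm {p : ℕ} (x : EuclideanSpace ℝ (Fin p)) (k : Fin p) : |x k| ≤ ‖x‖ := by
  rw [EuclideanSpace.norm_eq]
  calc |x k| = Real.sqrt (|x k| ^ 2) := by rw [Real.sqrt_sq (abs_nonneg _)]
  _ ≤ _ := by
      apply Real.sqrt_le_sqrt
      have : |x k| = ‖x k‖ := rfl
      rw [this]
      exact Finset.single_le_sum (f := fun i => ‖x i‖ ^ 2) (fun i _ => sq_nonneg _)
        (Finset.mem_univ k)

end Helpers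


lemma stopped_sum_integrable_and_zero {Ω E : Type*} {m0 : MeasurableSpace Ω}
    (P : Measure Ω) [IsProbabilityMeasure P]
    [NormedAddCommGroup E] [NormedSpace ℝ E] [MeasurableSpace E] [BorelSpace E]
    [SecondCountableTopology E] [CompleteSpace E]
    (u : ℕ → Ω → E) (τ : Ω → ℕ) (A : ℕ → Set Ω)
    (hτmeas : Measurable τ) (hτ1 : ∀ ω, 1 ≤ τ ω)
    (hu : ∀ j, 1 ≤ j → Measurable (u j))
    (hbd : ∀ ω, BddAbove (Set.range fun j => ‖u j ω‖))
    (hint : Integrable (fun ω => (⨆ j, ‖u j ω‖) * (τ ω : ℝ)) P)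
    (hA : ∀ j, 1 ≤ j → MeasurableSet (A j))
    (hAτ : ∀ j ω, 1 ≤ j → (j ≤ τ ω ↔ ω ∈ A j))
    (hzero : ∀ j, 1 ≤ j → ∫ ω, (A j).indicator (u j) ω ∂P = 0) :
    Integrable (fun ω => ∑ j ∈ Finset.Icc 1 (τ ω), u j ω) P ∧
      ∫ ω, ∑ j ∈ Finset.Icc 1 (τ ω), u j ω ∂P = 0 := by
  classical
  set G : Ω → ℝ := fun ω => ⨆ j, ‖u j ω‖ with hG
  have hG0 : ∀ ω j, ‖u j ω‖ ≤ G ω := fun ω j => le_ciSup (hbd ω) j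
  have hGnn : ∀ ω, 0 ≤ G ω := fun ω => le_trans (norm_nonneg _) (hG0 ω 0)
  have hGτ : ∀ ω j, ‖u j ω‖ ≤ G ω * τ ω := by
    intro ω j
    calc ‖u j ω‖ ≤ G ω := hG0 ω j
    _ = G ω * 1 := (mul_one _).symm
    _ ≤ G ω * τ ω := by
        apply mul_le_mul_of_nonneg_left _ (hGnn ω)
        exact_mod_cast hτ1 ω
  -- the stopped sum and its bound
  have hXmeas : Measurable fun ω => ∑ j ∈ Finset.Icc 1 (τ ω), u j ω :=
    measurable_stopped_sum hu hτmeas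
  have hXbd : ∀ ω, ‖∑ j ∈ Finset.Icc 1 (τ ω), u j ω‖ ≤ G ω * τ ω := by
    intro ω
    calc ‖∑ j ∈ Finset.Icc 1 (τ ω), u j ω‖ ≤ ∑ j ∈ Finset.Icc 1 (τ ω), ‖u j ω‖ :=
          norm_sum_le _ _
    _ ≤ ∑ _j ∈ Finset.Icc 1 (τ ω), G ω := Finset.sum_le_sum fun j _ => hG0 ω j
    _ = (τ ω : ℝ) * G ω := by
        rw [Finset.sum_const, Nat.card_Icc]
        simp [nsmul_eq_mul]
    _ = G ω * τ ω := mul_comm _ _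
  have hXint : Integrable (fun ω => ∑ j ∈ Finset.Icc 1 (τ ω), u j ω) P :=
    Integrable.mono' hint hXmeas.aestronglyMeasurable (Filter.Eventually.of_forall hXbd)
  refine ⟨hXint, ?_⟩
  -- rewrite as a tsum
  set w : ℕ → Ω → E := fun j => if 1 ≤ j then (A j).indicator (u j) else 0 with hw
  have hw0 : ∀ j ω, j ∉ Finset.Icc 1 (τ ω) → w j ω = 0 := by
    intro j ω hj
    rw [Finset.mem_Icc, not_and_or] at hj
    rcases hj with hj | hj
    · simp [hw, hj]
    · push_neg at hj
      have hj1 : 1 ≤ j := by omega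
      have : ω ∉ A j := fun hmem => absurd ((hAτ j ω hj1).mpr hmem) (by omega)
      simp [hw, hj1, Set.indicator_of_notMem this]
  have hweq : ∀ ω, ∑ j ∈ Finset.Icc 1 (τ ω), u j ω = ∑' j, w j ω := by
    intro ω
    rw [tsum_eq_sum (s := Finset.Icc 1 (τ ω)) (fun j hj => hw0 j ω hj)]
    apply Finset.sum_congr rfl
    intro j hj
    rw [Finset.mem_Icc] at hj
    have : ω ∈ A j := (hAτ j ω hj.1).mp hj.2
    simp [hw, hj.1, Set.indicator_of_mem this]
  have hwbdG : ∀ j ω, ‖w j ω‖ ≤ G ω := by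
    intro j ω
    by_cases hj : 1 ≤ j
    · simp only [hw, if_pos hj]
      exact le_trans (norm_indicator_le_norm_self _ _) (hG0 ω j)
    · simp only [hw, if_neg hj, Pi.zero_apply, norm_zero]
      exact hGnn ω
  have hwmeas : ∀ j, AEStronglyMeasurable (w j) P := by
    intro j
    by_cases hj : 1 ≤ j
    · simp only [hw, if_pos hj]
      exact (((hu j hj).indicator (hA j hj)).stronglyMeasurable).aestronglyMeasurable
    · simp only [hw, if_neg hj]
      exact aestronglyMeasurable_const
  have hterm : ∀ j, ∫ ω, w j ω ∂P = 0 := by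
    intro j
    by_cases hj : 1 ≤ j
    · simpa only [hw, if_pos hj] using hzero j hj
    · simp only [hw, if_neg hj]
      simp
  have hne : ∑' j, ∫⁻ ω, ‖w j ω‖₊ ∂P ≠ ⊤ := by
    rw [← lintegral_tsum fun j => (hwmeas j).aemeasurable.nnnorm.coe_nnreal_ennreal]
    have hptwise : ∀ ω, ∑' j, (‖w j ω‖₊ : ℝ≥0∞) ≤ ENNReal.ofReal (G ω * τ ω) := by
      intro ω
      have h1 : ∑' j, (‖w j ω‖₊ : ℝ≥0∞) = ∑ j ∈ Finset.Icc 1 (τ ω), (‖w j ω‖₊ : ℝ≥0∞) := by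
        apply tsum_eq_sum
        intro j hj
        rw [hw0 j ω hj]
        simp
      rw [h1]
      calc ∑ j ∈ Finset.Icc 1 (τ ω), (‖w j ω‖₊ : ℝ≥0∞)
          ≤ ∑ _j ∈ Finset.Icc 1 (τ ω), ENNReal.ofReal (G ω) := by
            refine Finset.sum_le_sum fun j _ => ?_
            show ‖w j ω‖ₑ ≤ _
            rw [← ofReal_norm]
            exact ENNReal.ofReal_le_ofReal (hwbdG j ω)
      _ = (Finset.Icc 1 (τ ω)).card • ENNReal.ofReal (G ω) := Finset.sum_const _
      _ = (τ ω : ℝ≥0∞) * ENNReal.ofReal (G ω) := by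
            rw [Nat.card_Icc]
            simp [nsmul_eq_mul]
      _ = ENNReal.ofReal (G ω * τ ω) := by
            rw [ENNReal.ofReal_mul (hGnn ω), ENNReal.ofReal_natCast, mul_comm]
    exact ((lintegral_mono hptwise).trans_lt hint.lintegral_lt_top).ne
  simp_rw [hweq]
  rw [integral_tsum hwmeas hne]
  simp only [hterm, tsum_zero]

section DataFunctions

variable {p : ℕ}

/-- The stopping index as a function of the data vector. -/
noncomputable def dataT (v : ℝ × (ℕ → ℝ × ℝ × ℝ × EuclideanSpace ℝ (Fin p))) : ℕ :=
  sInf {j | 1 ≤ j ∧ v.1 ≤ (v.2 j).1}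

noncomputable def dataF1 (v : ℝ × (ℕ → ℝ × ℝ × ℝ × EuclideanSpace ℝ (Fin p))) :
    EuclideanSpace ℝ (Fin p) :=
  ∑ j ∈ Finset.Icc 1 (dataT v), (v.2 j).2.1 • (v.2 j).2.2.2

noncomputable def dataF2 (σ0 : ℝ) (v : ℝ × (ℕ → ℝ × ℝ × ℝ × EuclideanSpace ℝ (Fin p))) : ℝ :=
  ∑ j ∈ Finset.Icc 1 (dataT v), (v.2 j).2.2.1 * (((v.2 j).2.1) ^ 2 - σ0 ^ 2)

lemma measurable_dataT : Measurable (dataT (p := p)) := by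
  unfold dataT
  refine measurable_nat_sInf
    (q := fun n (v : ℝ × (ℕ → ℝ × ℝ × ℝ × EuclideanSpace ℝ (Fin p))) => 1 ≤ n ∧ v.1 ≤ (v.2 n).1) ?_
  intro n
  by_cases hn : 1 ≤ n
  · have h : {v : ℝ × (ℕ → ℝ × ℝ × ℝ × EuclideanSpace ℝ (Fin p)) | 1 ≤ n ∧ v.1 ≤ (v.2 n).1}
        = {v | v.1 ≤ (v.2 n).1} := by ext v; simp [hn]
    rw [h]
    exact measurableSet_le measurable_fst (((measurable_pi_apply n).comp measurable_snd).fst)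
  · have h : {v : ℝ × (ℕ → ℝ × ℝ × ℝ × EuclideanSpace ℝ (Fin p)) | 1 ≤ n ∧ v.1 ≤ (v.2 n).1}
        = ∅ := by ext v; simp [hn]
    rw [h]
    exact MeasurableSet.empty

lemma measurable_dataF1 : Measurable (dataF1 (p := p)) := by
  unfold dataF1
  refine measurable_stopped_sum (u := fun j (v : ℝ × (ℕ → ℝ × ℝ × ℝ × EuclideanSpace ℝ (Fin p))) => (v.2 j).2.1 • (v.2 j).2.2.2)
    (fun j _ => ?_) measurable_dataT
  have h1 : Measurable fun v : ℝ × (ℕ → ℝ × ℝ × ℝ × EuclideanSpace ℝ (Fin p)) => v.2 j :=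
    (measurable_pi_apply j).comp measurable_snd
  exact h1.snd.fst.smul h1.snd.snd.snd

lemma measurable_dataF2 (σ0 : ℝ) : Measurable (dataF2 (p := p) σ0) := by
  unfold dataF2
  refine measurable_stopped_sum
    (u := fun j (v : ℝ × (ℕ → ℝ × ℝ × ℝ × EuclideanSpace ℝ (Fin p))) => (v.2 j).2.2.1 * (((v.2 j).2.1) ^ 2 - σ0 ^ 2))
    (fun j _ => ?_) measurable_dataT
  have h1 : Measurable fun v : ℝ × (ℕ → ℝ × ℝ × ℝ × EuclideanSpace ℝ (Fin p)) => v.2 j :=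
    (measurable_pi_apply j).comp measurable_snd
  exact h1.snd.snd.fst.mul ((h1.snd.fst.pow_const 2).sub measurable_const)

end DataFunctions

/-- Proposition 2.1: under Condition 5, the stopped estimating functions are
unbiased, and `n⁻¹ g_{n,k}` at the true parameter tends to `0` almost surely, `k = 1, 2`. -/
theorem statement1
    {Ω : Type*} {m0 : MeasurableSpace Ω} (P : Measure Ω) [IsProbabilityMeasure P]
    {p : ℕ}
    (S : ℕ → ℕ → Ω → ℝ) (C : ℕ → Ω → ℝ) (x : ℕ → ℕ → Ω → EuclideanSpace ℝ (Fin p))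
    (f : ℕ → ℕ → Ω → EuclideanSpace ℝ (Fin p)) (Z : ℕ → ℕ → Ω → ℝ) (b : ℕ → ℕ → Ω → ℝ)
    (σ0 : ℝ) (𝒢 : ℕ → Filtration ℕ m0) (τ : ℕ → Ω → ℕ)
    -- basic structure of the data
    (hS0 : ∀ i ω, S i 0 ω = 0)
    (hSmono : ∀ i ω, StrictMono fun j => S i j ω)
    (hCpos : ∀ i ω, 0 < C i ω)
    (hSmeas : ∀ i j, Measurable (S i j))
    (hCmeas : ∀ i, Measurable (C i))
    -- `τ_i = min{j ≥ 1 : C_i ≤ S_{ij}}`, finite (ℕ-valued)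
    (hτ : ∀ i ω, 1 ≤ τ i ω ∧ C i ω ≤ S i (τ i ω) ω ∧ ∀ j, 1 ≤ j → j < τ i ω → S i j ω < C i ω)
    -- measurability with respect to the enlarged filtrations 𝓖_i
    (hfmeas : ∀ i j, 1 ≤ j → StronglyMeasurable[𝒢 i (j - 1)] (f i j))
    (hbmeas : ∀ i j, 1 ≤ j → StronglyMeasurable[𝒢 i (j - 1)] (b i j))
    (hZmeas : ∀ i j, 1 ≤ j → StronglyMeasurable[𝒢 i j] (Z i j))
    (hSC : ∀ i j, 1 ≤ j → MeasurableSet[𝒢 i (j - 1)] {ω | S i (j - 1) ω < C i ω})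
    -- conditional moments at the true parameter (model (1.2) together with assumption (A))
    (hZcond : ∀ i j, 1 ≤ j → P[Z i j|𝒢 i (j - 1)] =ᵐ[P] fun _ => 0)
    (hZ2cond : ∀ i j, 1 ≤ j → P[fun ω => (Z i j ω) ^ 2|𝒢 i (j - 1)] =ᵐ[P] fun _ => σ0 ^ 2)
    (hZL2 : ∀ i j, 1 ≤ j → Integrable (fun ω => (Z i j ω) ^ 2) P)
    -- the data vectors of distinct subjects are i.i.d.
    (hindep : ProbabilityTheory.iIndepFun
      (fun i ω => (C i ω, fun j => (S i j ω, Z i j ω, b i j ω, f i j ω))) P)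
    (hident : ∀ i, ProbabilityTheory.IdentDistrib
      (fun ω => (C i ω, fun j => (S i j ω, Z i j ω, b i j ω, f i j ω)))
      (fun ω => (C 1 ω, fun j => (S 1 j ω, Z 1 j ω, b 1 j ω, f 1 j ω))) P P)
    -- Condition 5: `g_i(θ₀) τ_i` and `h_i(η₀) τ_i` are integrable, where
    -- `g_i = sup_j ‖f_{ij} Z_{ij}‖` and `h_i = sup_j |b_{ij}(Z_{ij}² − σ₀²)|`
    (hbd1 : ∀ i ω, BddAbove (Set.range fun j => ‖Z i j ω • f i j ω‖))
    (hbd2 : ∀ i ω, BddAbove (Set.range fun j => |b i j ω * ((Z i j ω) ^ 2 - σ0 ^ 2)|))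
    (hCond5a : ∀ i, Integrable (fun ω => (⨆ j, ‖Z i j ω • f i j ω‖) * (τ i ω : ℝ)) P)
    (hCond5b : ∀ i,
      Integrable (fun ω => (⨆ j, |b i j ω * ((Z i j ω) ^ 2 - σ0 ^ 2)|) * (τ i ω : ℝ)) P) :
    (∀ n, 1 ≤ n → ∫ ω, gn1 f Z τ n ω ∂P = 0) ∧
    (∀ n, 1 ≤ n → ∫ ω, gn2 b Z σ0 τ n ω ∂P = 0) ∧
    (∀ᵐ ω ∂P, Tendsto (fun n : ℕ => (n : ℝ)⁻¹ • gn1 f Z τ n ω) atTop (𝓝 0)) ∧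
    (∀ᵐ ω ∂P, Tendsto (fun n : ℕ => (n : ℝ)⁻¹ * gn2 b Z σ0 τ n ω) atTop (𝓝 0)) := by
  classical
  have hτ1 : ∀ i ω, 1 ≤ τ i ω := fun i ω => (hτ i ω).1
  have hτcast : ∀ i ω, (1 : ℝ) ≤ (τ i ω : ℝ) := by intro i ω; exact_mod_cast hτ1 i ω
  -- characterization of the stopping index
  have hjτ : ∀ i j ω, 1 ≤ j → (j ≤ τ i ω ↔ S i (j - 1) ω < C i ω) := by
    intro i j ω hj
    obtain ⟨h1, h2, h3⟩ := hτ i ω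
    constructor
    · intro hle
      rcases Nat.lt_or_ge j 2 with hj2 | hj2
      · have : j = 1 := by omega
        subst this
        simpa [hS0 i ω] using hCpos i ω
      · exact h3 (j - 1) (by omega) (by omega)
    · intro hlt
      by_contra hcon
      push_neg at hcon
      have hle : τ i ω ≤ j - 1 := by omega
      have : S i (τ i ω) ω ≤ S i (j - 1) ω := (hSmono i ω).monotone hle
      linarith
  have hτeq : ∀ i ω, τ i ω = sInf {j | 1 ≤ j ∧ C i ω ≤ S i j ω} := by
    intro i ω
    obtain ⟨h1, h2, h3⟩ := hτ i ω
    have hmem : τ i ω ∈ {j | 1 ≤ j ∧ C i ω ≤ S i j ω} := ⟨h1, h2⟩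
    refine le_antisymm ?_ (Nat.sInf_le hmem)
    have hsmem := Nat.sInf_mem (⟨τ i ω, hmem⟩ : Set.Nonempty {j | 1 ≤ j ∧ C i ω ≤ S i j ω})
    by_contra hcon
    push_neg at hcon
    exact absurd hsmem.2 (not_le.mpr (h3 _ hsmem.1 hcon))
  have hτmeas : ∀ i, Measurable (τ i) := by
    intro i
    have h : τ i = fun ω => sInf {j | 1 ≤ j ∧ C i ω ≤ S i j ω} := funext (hτeq i)
    rw [h]
    refine measurable_nat_sInf (q := fun n ω => 1 ≤ n ∧ C i ω ≤ S i n ω) ?_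
    intro n
    by_cases hn : 1 ≤ n
    · have h2 : {ω | 1 ≤ n ∧ C i ω ≤ S i n ω} = {ω | C i ω ≤ S i n ω} := by ext ω; simp [hn]
      rw [h2]
      exact measurableSet_le (hCmeas i) (hSmeas i n)
    · have h2 : {ω | 1 ≤ n ∧ C i ω ≤ S i n ω} = ∅ := by ext ω; simp [hn]
      rw [h2]
      exact MeasurableSet.empty
  -- measurability w.r.t. the ambient σ-algebra
  have hZm : ∀ i j, 1 ≤ j → StronglyMeasurable (Z i j) :=
    fun i j hj => (hZmeas i j hj).mono ((𝒢 i).le j)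
  have hfm : ∀ i j, 1 ≤ j → StronglyMeasurable (f i j) :=
    fun i j hj => (hfmeas i j hj).mono ((𝒢 i).le (j - 1))
  have hbm : ∀ i j, 1 ≤ j → StronglyMeasurable (b i j) :=
    fun i j hj => (hbmeas i j hj).mono ((𝒢 i).le (j - 1))
  have hAmeas : ∀ i j, 1 ≤ j → MeasurableSet {ω | S i (j - 1) ω < C i ω} :=
    fun i j hj => (𝒢 i).le (j - 1) _ (hSC i j hj)
  have hZint : ∀ i j, 1 ≤ j → Integrable (Z i j) P := fun i j hj =>
    ((memLp_two_iff_integrable_sq (hZm i j hj).aestronglyMeasurable).2 (hZL2 i j hj)).integrable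
      one_le_two
  have hu1 : ∀ i j, 1 ≤ j → Measurable fun ω => Z i j ω • f i j ω := fun i j hj =>
    (hZm i j hj).measurable.smul (hfm i j hj).measurable
  have hu2 : ∀ i j, 1 ≤ j → Measurable fun ω => b i j ω * ((Z i j ω) ^ 2 - σ0 ^ 2) :=
    fun i j hj => (hbm i j hj).measurable.mul
      (((hZm i j hj).measurable.pow_const 2).sub measurable_const)
  -- sup bounds
  have hG1 : ∀ i ω j, ‖Z i j ω • f i j ω‖ ≤ ⨆ j', ‖Z i j' ω • f i j' ω‖ :=
    fun i ω j => le_ciSup (hbd1 i ω) j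
  have hG1nn : ∀ i ω, 0 ≤ ⨆ j', ‖Z i j' ω • f i j' ω‖ :=
    fun i ω => le_trans (norm_nonneg _) (hG1 i ω 0)
  have hG1τ : ∀ i ω j, ‖Z i j ω • f i j ω‖ ≤ (⨆ j', ‖Z i j' ω • f i j' ω‖) * (τ i ω : ℝ) := by
    intro i ω j
    refine le_trans (hG1 i ω j) ?_
    nlinarith [hG1nn i ω, hτcast i ω]
  have hG2 : ∀ i ω j, |b i j ω * ((Z i j ω) ^ 2 - σ0 ^ 2)|
      ≤ ⨆ j', |b i j' ω * ((Z i j' ω) ^ 2 - σ0 ^ 2)| := fun i ω j => le_ciSup (hbd2 i ω) j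
  have hG2nn : ∀ i ω, 0 ≤ ⨆ j', |b i j' ω * ((Z i j' ω) ^ 2 - σ0 ^ 2)| :=
    fun i ω => le_trans (abs_nonneg _) (hG2 i ω 0)
  have hG2τ : ∀ i ω j, |b i j ω * ((Z i j ω) ^ 2 - σ0 ^ 2)|
      ≤ (⨆ j', |b i j' ω * ((Z i j' ω) ^ 2 - σ0 ^ 2)|) * (τ i ω : ℝ) := by
    intro i ω j
    refine le_trans (hG2 i ω j) ?_
    nlinarith [hG2nn i ω, hτcast i ω]
  -- the per-term zero integrals
  have hzero1 : ∀ i j, 1 ≤ j →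
      ∫ ω, ({ω | S i (j - 1) ω < C i ω}).indicator (fun ω => Z i j ω • f i j ω) ω ∂P = 0 := by
    intro i j hj
    set A : Set Ω := {ω | S i (j - 1) ω < C i ω} with hAdef
    have hIint : Integrable (A.indicator fun ω => Z i j ω • f i j ω) P := by
      refine Integrable.mono' (hCond5a i)
        (((hu1 i j hj).indicator (hAmeas i j hj)).stronglyMeasurable.aestronglyMeasurable)
        (Filter.Eventually.of_forall fun ω => ?_)
      exact le_trans (norm_indicator_le_norm_self _ _) (hG1τ i ω j)
    refine PiLp.ext fun k => ?_
    have hfk : StronglyMeasurable[𝒢 i (j - 1)] fun ω => f i j ω k := by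
      have := (EuclideanSpace.proj (𝕜 := ℝ) k).continuous.comp_stronglyMeasurable
        (hfmeas i j hj)
      simpa using this
    have hg : StronglyMeasurable[𝒢 i (j - 1)] (A.indicator fun ω => f i j ω k) :=
      hfk.indicator (hSC i j hj)
    have hgζ : Integrable (fun ω => A.indicator (fun ω' => f i j ω' k) ω * Z i j ω) P := by
      refine Integrable.mono' (hCond5a i)
        (((hg.mono ((𝒢 i).le (j - 1))).measurable.mul
          (hZm i j hj).measurable).aestronglyMeasurable)
        (Filter.Eventually.of_forall fun ω => ?_)
      by_cases hω : ω ∈ A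
      · rw [Set.indicator_of_mem hω]
        calc ‖f i j ω k * Z i j ω‖ = |Z i j ω * f i j ω k| := by
              rw [Real.norm_eq_abs, mul_comm]
        _ = |(Z i j ω • f i j ω) k| := rfl
        _ ≤ ‖Z i j ω • f i j ω‖ := abs_coord_le_norm _ k
        _ ≤ _ := hG1τ i ω j
      · rw [Set.indicator_of_notMem hω]
        simp only [zero_mul, norm_zero]
        exact mul_nonneg (hG1nn i ω) (Nat.cast_nonneg _)
    have hzz := integral_mul_condexp_zero ((𝒢 i).le (j - 1)) P hg (hZint i j hj) hgζ
      (hZcond i j hj)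
    have hproj := ContinuousLinearMap.integral_comp_comm (EuclideanSpace.proj (𝕜 := ℝ) k)
      hIint
    have heq : (fun ω => EuclideanSpace.proj (𝕜 := ℝ) k
        (A.indicator (fun ω' => Z i j ω' • f i j ω') ω))
        = fun ω => A.indicator (fun ω' => f i j ω' k) ω * Z i j ω := by
      funext ω
      by_cases hω : ω ∈ A
      · rw [Set.indicator_of_mem hω, Set.indicator_of_mem hω]
        show (Z i j ω • f i j ω) k = f i j ω k * Z i j ω
        show Z i j ω * f i j ω k = f i j ω k * Z i j ω
        ring
      · rw [Set.indicator_of_notMem hω, Set.indicator_of_notMem hω]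
        simp
    rw [heq] at hproj
    have : EuclideanSpace.proj (𝕜 := ℝ) k
        (∫ ω, A.indicator (fun ω' => Z i j ω' • f i j ω') ω ∂P) = 0 := by
      rw [← hproj, hzz]
    simpa using this
  have hcond2 : ∀ i j, 1 ≤ j →
      P[fun ω => (Z i j ω) ^ 2 - σ0 ^ 2|𝒢 i (j - 1)] =ᵐ[P] fun _ => (0 : ℝ) := by
    intro i j hj
    have hsub := condExp_sub (m := 𝒢 i (j - 1)) (μ := P) (hZL2 i j hj)
      (integrable_const (σ0 ^ 2))
    have hconst : P[(fun _ => σ0 ^ 2 : Ω → ℝ)|𝒢 i (j - 1)] = fun _ => σ0 ^ 2 :=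
      condExp_const ((𝒢 i).le (j - 1)) _
    have h2 := hZ2cond i j hj
    have hform : (fun ω => (Z i j ω) ^ 2 - σ0 ^ 2)
        = (fun ω => (Z i j ω) ^ 2) - fun _ => σ0 ^ 2 := rfl
    rw [hform]
    refine hsub.trans ?_
    filter_upwards [h2] with ω hω
    simp only [Pi.sub_apply, hconst, hω]
    ring
  have hzero2 : ∀ i j, 1 ≤ j →
      ∫ ω, ({ω | S i (j - 1) ω < C i ω}).indicator
        (fun ω => b i j ω * ((Z i j ω) ^ 2 - σ0 ^ 2)) ω ∂P = 0 := by
    intro i j hj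
    set A : Set Ω := {ω | S i (j - 1) ω < C i ω} with hAdef
    have hg : StronglyMeasurable[𝒢 i (j - 1)] (A.indicator (b i j)) :=
      (hbmeas i j hj).indicator (hSC i j hj)
    have hζint : Integrable (fun ω => (Z i j ω) ^ 2 - σ0 ^ 2) P :=
      (hZL2 i j hj).sub (integrable_const _)
    have hgζ : Integrable (fun ω => A.indicator (b i j) ω * ((Z i j ω) ^ 2 - σ0 ^ 2)) P := by
      refine Integrable.mono' (hCond5b i)
        (((hg.mono ((𝒢 i).le (j - 1))).measurable.mul
          (((hZm i j hj).measurable.pow_const 2).sub measurable_const)).aestronglyMeasurable)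
        (Filter.Eventually.of_forall fun ω => ?_)
      by_cases hω : ω ∈ A
      · rw [Set.indicator_of_mem hω]
        exact le_trans (le_of_eq (Real.norm_eq_abs _)) (hG2τ i ω j)
      · rw [Set.indicator_of_notMem hω]
        simp only [zero_mul, norm_zero]
        exact mul_nonneg (hG2nn i ω) (Nat.cast_nonneg _)
    have heq : ∀ ω, A.indicator (fun ω' => b i j ω' * ((Z i j ω') ^ 2 - σ0 ^ 2)) ω
        = A.indicator (b i j) ω * ((Z i j ω) ^ 2 - σ0 ^ 2) := by
      intro ω
      by_cases hω : ω ∈ A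
      · rw [Set.indicator_of_mem hω, Set.indicator_of_mem hω]
      · rw [Set.indicator_of_notMem hω, Set.indicator_of_notMem hω, zero_mul]
    rw [integral_congr_ae (Filter.Eventually.of_forall heq)]
    exact integral_mul_condexp_zero ((𝒢 i).le (j - 1)) P hg hζint hgζ (hcond2 i j hj)
  -- apply the stopped-sum lemma
  have hkey1 : ∀ i,
      Integrable (fun ω => ∑ j ∈ Finset.Icc 1 (τ i ω), Z i j ω • f i j ω) P ∧
        ∫ ω, ∑ j ∈ Finset.Icc 1 (τ i ω), Z i j ω • f i j ω ∂P = 0 := fun i =>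
    stopped_sum_integrable_and_zero P (fun j ω => Z i j ω • f i j ω) (τ i)
      (fun j => {ω | S i (j - 1) ω < C i ω}) (hτmeas i) (hτ1 i) (hu1 i) (hbd1 i)
      (hCond5a i) (hAmeas i) (fun j ω hj => hjτ i j ω hj) (hzero1 i)
  have hkey2 : ∀ i,
      Integrable (fun ω => ∑ j ∈ Finset.Icc 1 (τ i ω), b i j ω * ((Z i j ω) ^ 2 - σ0 ^ 2)) P ∧
        ∫ ω, ∑ j ∈ Finset.Icc 1 (τ i ω), b i j ω * ((Z i j ω) ^ 2 - σ0 ^ 2) ∂P = 0 := by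
    intro i
    have hbd2' : ∀ ω, BddAbove (Set.range fun j => ‖b i j ω * ((Z i j ω) ^ 2 - σ0 ^ 2)‖) := by
      intro ω
      simpa only [Real.norm_eq_abs] using hbd2 i ω
    have hint2' : Integrable
        (fun ω => (⨆ j, ‖b i j ω * ((Z i j ω) ^ 2 - σ0 ^ 2)‖) * (τ i ω : ℝ)) P := by
      simpa only [Real.norm_eq_abs] using hCond5b i
    exact stopped_sum_integrable_and_zero P
      (fun j ω => b i j ω * ((Z i j ω) ^ 2 - σ0 ^ 2)) (τ i)
      (fun j => {ω | S i (j - 1) ω < C i ω}) (hτmeas i) (hτ1 i) (hu2 i) hbd2'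
      hint2' (hAmeas i) (fun j ω hj => hjτ i j ω hj) (hzero2 i)
  -- the data maps
  set D : ℕ → Ω → ℝ × (ℕ → ℝ × ℝ × ℝ × EuclideanSpace ℝ (Fin p)) :=
    fun i ω => (C i ω, fun j => (S i j ω, Z i j ω, b i j ω, f i j ω)) with hD
  have hTD : ∀ i ω, dataT (D i ω) = τ i ω := by
    intro i ω
    rw [hτeq i ω]
    rfl
  have hF1D : ∀ i, (fun ω => ∑ j ∈ Finset.Icc 1 (τ i ω), Z i j ω • f i j ω) = dataF1 ∘ D i := by
    intro i
    funext ω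
    show _ = dataF1 (D i ω)
    rw [dataF1, hTD]
  have hF2D : ∀ i, (fun ω => ∑ j ∈ Finset.Icc 1 (τ i ω), b i j ω * ((Z i j ω) ^ 2 - σ0 ^ 2))
      = dataF2 σ0 ∘ D i := by
    intro i
    funext ω
    show _ = dataF2 σ0 (D i ω)
    rw [dataF2, hTD]
  -- i.i.d. structure of the composed variables
  have hiid1 : ∀ i j, i ≠ j →
      ProbabilityTheory.IndepFun (dataF1 ∘ D i) (dataF1 ∘ D j) P := fun i j hij =>
    (hindep.comp (fun _ => dataF1) fun _ => measurable_dataF1).indepFun hij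
  have hiid2 : ∀ i j, i ≠ j →
      ProbabilityTheory.IndepFun (dataF2 σ0 ∘ D i) (dataF2 σ0 ∘ D j) P := fun i j hij =>
    (hindep.comp (fun _ => dataF2 σ0) fun _ => measurable_dataF2 σ0).indepFun hij
  have hid1 : ∀ i, ProbabilityTheory.IdentDistrib (dataF1 ∘ D i) (dataF1 ∘ D 1) P P :=
    fun i => (hident i).comp measurable_dataF1
  have hid2 : ∀ i, ProbabilityTheory.IdentDistrib (dataF2 σ0 ∘ D i) (dataF2 σ0 ∘ D 1) P P :=
    fun i => (hident i).comp (measurable_dataF2 σ0)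
  -- strong law for the shifted sequences
  have hslln1 := ProbabilityTheory.strong_law_ae (μ := P) (fun i => dataF1 ∘ D (i + 1))
    (by show Integrable (dataF1 ∘ D 1) P; rw [← hF1D 1]; exact (hkey1 1).1)
    (fun i j hij => hiid1 (i + 1) (j + 1) (by omega))
    (fun i => hid1 (i + 1))
  have hslln2 := ProbabilityTheory.strong_law_ae (μ := P) (fun i => dataF2 σ0 ∘ D (i + 1))
    (by show Integrable (dataF2 σ0 ∘ D 1) P; rw [← hF2D 1]; exact (hkey2 1).1)
    (fun i j hij => hiid2 (i + 1) (j + 1) (by omega))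
    (fun i => hid2 (i + 1))
  have hmean1 : (∫ ω, (dataF1 ∘ D 1) ω ∂P) = 0 := by rw [← hF1D 1]; exact (hkey1 1).2
  have hmean2 : (∫ ω, (dataF2 σ0 ∘ D 1) ω ∂P) = 0 := by rw [← hF2D 1]; exact (hkey2 1).2
  -- sums over `range n` vs `Icc 1 n`
  have hgn1eq : ∀ (n : ℕ) ω, gn1 f Z τ n ω = ∑ i ∈ Finset.range n, (dataF1 ∘ D (i + 1)) ω := by
    intro n ω
    rw [gn1, ← Finset.Ico_add_one_right_eq_Icc, Finset.sum_Ico_eq_sum_range]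
    simp only [Nat.add_sub_cancel]
    refine Finset.sum_congr rfl fun i _ => ?_
    rw [show 1 + i = i + 1 from Nat.add_comm 1 i]
    exact congrFun (hF1D (i + 1)) ω
  have hgn2eq : ∀ (n : ℕ) ω, gn2 b Z σ0 τ n ω
      = ∑ i ∈ Finset.range n, (dataF2 σ0 ∘ D (i + 1)) ω := by
    intro n ω
    rw [gn2, ← Finset.Ico_add_one_right_eq_Icc, Finset.sum_Ico_eq_sum_range]
    simp only [Nat.add_sub_cancel]
    refine Finset.sum_congr rfl fun i _ => ?_
    rw [show 1 + i = i + 1 from Nat.add_comm 1 i]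
    exact congrFun (hF2D (i + 1)) ω
  refine ⟨?_, ?_, ?_, ?_⟩
  · intro n hn
    rw [show (fun ω => gn1 f Z τ n ω) = fun ω =>
        ∑ i ∈ Finset.Icc 1 n, ∑ j ∈ Finset.Icc 1 (τ i ω), Z i j ω • f i j ω from rfl]
    rw [integral_finset_sum _ fun i _ => (hkey1 i).1]
    exact Finset.sum_eq_zero fun i _ => (hkey1 i).2
  · intro n hn
    rw [show (fun ω => gn2 b Z σ0 τ n ω) = fun ω =>
        ∑ i ∈ Finset.Icc 1 n, ∑ j ∈ Finset.Icc 1 (τ i ω), b i j ω * ((Z i j ω) ^ 2 - σ0 ^ 2)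
        from rfl]
    rw [integral_finset_sum _ fun i _ => (hkey2 i).1]
    exact Finset.sum_eq_zero fun i _ => (hkey2 i).2
  · refine hslln1.mono fun ω hω => ?_
    have heq : (fun n : ℕ => (n : ℝ)⁻¹ • gn1 f Z τ n ω)
        = fun n : ℕ => (n : ℝ)⁻¹ • ∑ i ∈ Finset.range n, (dataF1 ∘ D (i + 1)) ω := by
      funext n
      rw [hgn1eq]
    rw [heq]
    convert hω using 3
    · rfl
    exact hmean1.symm
  · refine hslln2.mono fun ω hω => ?_
    have heq : (fun n : ℕ => (n : ℝ)⁻¹ * gn2 b Z σ0 τ n ω)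
        = fun n : ℕ => (n : ℝ)⁻¹ • ∑ i ∈ Finset.range n, (dataF2 σ0 ∘ D (i + 1)) ω := by
      funext n
      rw [hgn2eq, smul_eq_mul]
    rw [heq]
    convert hω using 3
    exact hmean2.symm
end

section
/- (Key factorization step in the proofs of Proposition 2.2 and Theorem 2.1) Fix i, j with P(S_{i,j−1} < C_i < S_{ij}) > 0 and assume condition (B_{f(θ₀)}). Then E[f_{ij}(θ₀) I_{ij}^{cen} Z_{ij}(θ₀)] = E[f_{ij}(θ₀) I_{ij}^{cen}] · E[Z_{ij}(θ₀) I_{ij}^{cen}] / E[I_{ij}^{cen}]. -/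
open MeasureTheory Filter Topology

/-- Indicator (as a real random variable) of a censored gap time. -/
noncomputable def indCen {Ω : Type*} (S : ℕ → ℕ → Ω → ℝ) (C : ℕ → Ω → ℝ)
    (i j : ℕ) (ω : Ω) : ℝ :=
  if S i (j - 1) ω < C i ω ∧ C i ω < S i j ω then 1 else 0

/-- The σ-field `𝓞(f_i(θ)) = σ( f_{ij}(θ) I^{cen}_{ij}, I^{cen}_{ij} (j ≥ 1) )`. -/
noncomputable def obsSigma {Ω : Type*} {p : ℕ} (S : ℕ → ℕ → Ω → ℝ) (C : ℕ → Ω → ℝ)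
    (f : ℕ → ℕ → Ω → EuclideanSpace ℝ (Fin p)) (i : ℕ) : MeasurableSpace Ω :=
  ⨆ j : ℕ, ⨆ _ : 1 ≤ j,
    (MeasurableSpace.comap (fun ω => indCen S C i j ω • f i j ω) inferInstance ⊔
      MeasurableSpace.comap (indCen S C i j) inferInstance)

lemma indCen_eq_zero_or_one {Ω : Type*} (S : ℕ → ℕ → Ω → ℝ) (C : ℕ → Ω → ℝ)
    (i j : ℕ) (ω : Ω) : indCen S C i j ω = 0 ∨ indCen S C i j ω = 1 := by
  unfold indCen; split <;> simp

/-- key factorization step: under condition `(B_{f(θ₀)})` and positivity of the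
censoring probability, `E[f_{ij} I^{cen}_{ij} Z_{ij}] = E[f_{ij} I^{cen}_{ij}] ·
E[Z_{ij} I^{cen}_{ij}] / E[I^{cen}_{ij}]`. -/
theorem statement3
    {Ω : Type*} {m0 : MeasurableSpace Ω} (P : Measure Ω) [IsProbabilityMeasure P]
    {p : ℕ}
    (S : ℕ → ℕ → Ω → ℝ) (C : ℕ → Ω → ℝ)
    (f : ℕ → ℕ → Ω → EuclideanSpace ℝ (Fin p)) (Z : ℕ → ℕ → Ω → ℝ)
    (i j : ℕ) (hj : 1 ≤ j)
    -- basic structure and measurability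
    (hS0 : ∀ i ω, S i 0 ω = 0)
    (hSmono : ∀ i ω, StrictMono fun j => S i j ω)
    (hCpos : ∀ i ω, 0 < C i ω)
    (hSmeas : ∀ i j, Measurable (S i j))
    (hCmeas : ∀ i, Measurable (C i))
    (hfmeas : ∀ i j, StronglyMeasurable (f i j))
    (hZmeas : ∀ i j, Measurable (Z i j))
    (hZL2 : Integrable (fun ω => (Z i j ω) ^ 2) P)
    -- the conditioning σ-fields are sub-σ-fields of 𝓕
    (hO : obsSigma S C f i ≤ m0)
    (hI : MeasurableSpace.comap (indCen S C i j) inferInstance ≤ m0)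
    -- condition (B_{f(θ₀)}):
    -- `I^{cen}_{ij} E[Z_{ij} | 𝓞(f_i)] = I^{cen}_{ij} E[Z_{ij} | σ(I^{cen}_{ij})]` a.s.
    (hBf : ∀ j, 1 ≤ j →
      (fun ω => indCen S C i j ω * (P[Z i j|obsSigma S C f i]) ω) =ᵐ[P]
        fun ω =>
          indCen S C i j ω *
            (P[Z i j|MeasurableSpace.comap (indCen S C i j) inferInstance]) ω)
    -- `P(S_{i,j-1} < C_i < S_{ij}) > 0`
    (hpos : 0 < ∫ ω, indCen S C i j ω ∂P)
    -- existence of the integrals involved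
    (hint1 : Integrable (fun ω => (indCen S C i j ω * Z i j ω) • f i j ω) P)
    (hint2 : Integrable (fun ω => indCen S C i j ω • f i j ω) P)
    (hint3 : Integrable (fun ω => indCen S C i j ω * Z i j ω) P) :
    ∫ ω, (indCen S C i j ω * Z i j ω) • f i j ω ∂P =
      ((∫ ω, Z i j ω * indCen S C i j ω ∂P) / ∫ ω, indCen S C i j ω ∂P) •
        ∫ ω, indCen S C i j ω • f i j ω ∂P := by
  classical
  set I : Ω → ℝ := indCen S C i j with hIdef
  have hI01 : ∀ ω, I ω = 0 ∨ I ω = 1 := indCen_eq_zero_or_one S C i j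
  -- the indicator value integral is nonzero
  have hintI : ∫ ω, I ω ∂P ≠ 0 := ne_of_gt hpos
  -- Z is integrable
  have hZint : Integrable (Z i j) P := by
    have hmem : MemLp (Z i j) 2 P :=
      (memLp_two_iff_integrable_sq (hZmeas i j).aestronglyMeasurable).2 hZL2
    exact hmem.integrable (one_le_two (α := ENNReal))
  -- (MeasurableSpace.comap (indCen S C i j) inferInstance) ≤ (obsSigma S C f i)
  have hXle : (MeasurableSpace.comap (fun ω => indCen S C i j ω • f i j ω) inferInstance ⊔
      MeasurableSpace.comap (indCen S C i j) inferInstance) ≤ obsSigma S C f i := by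
    unfold obsSigma
    exact le_iSup_of_le j (le_iSup_of_le hj le_rfl)
  have hmIle : (MeasurableSpace.comap (indCen S C i j) inferInstance) ≤
      (obsSigma S C f i) := le_sup_right.trans hXle
  have hgle : MeasurableSpace.comap (fun ω => indCen S C i j ω • f i j ω)
      inferInstance ≤ (obsSigma S C f i) := le_sup_left.trans hXle
  have hg_meas : Measurable[(obsSigma S C f i)] (fun ω => I ω • f i j ω) :=
    Measurable.of_comap_le hgle
  have hg_sm : StronglyMeasurable[(obsSigma S C f i)] (fun ω => I ω • f i j ω) :=
    hg_meas.stronglyMeasurable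
  -- there is a point where the indicator is 1
  have hex : ∃ ω₀, I ω₀ = 1 := by
    by_contra hno
    push_neg at hno
    have hzero : ∀ ω, I ω = 0 := fun ω => (hI01 ω).resolve_right (hno ω)
    rw [show (fun ω => indCen S C i j ω) = (fun _ => (0 : ℝ)) from funext hzero] at hpos
    simp at hpos
  obtain ⟨ω₀, hω₀⟩ := hex
  set h : Ω → ℝ := P[Z i j|(MeasurableSpace.comap (indCen S C i j) inferInstance)] with hhdef
  set c' : ℝ := h ω₀ with hc'def
  -- h is constant on `{I = 1}`
  have hconst : ∀ ω, I ω = 1 → h ω = c' := by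
    intro ω hω
    have hsm : StronglyMeasurable[(MeasurableSpace.comap (indCen S C i j) inferInstance)] h := stronglyMeasurable_condExp
    have hmeas : MeasurableSet[(MeasurableSpace.comap (indCen S C i j) inferInstance)] (h ⁻¹' {c'}) :=
      hsm.measurable (measurableSet_singleton c')
    obtain ⟨B, hB, hBeq⟩ := hmeas
    have hω₀mem : ω₀ ∈ indCen S C i j ⁻¹' B := by
      rw [hBeq]; exact rfl
    have : ω ∈ indCen S C i j ⁻¹' B := by
      simp only [Set.mem_preimage] at hω₀mem ⊢
      have : indCen S C i j ω = indCen S C i j ω₀ := by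
        rw [← hIdef] at *; rw [hω, hω₀]
      rw [this]; exact hω₀mem
    rw [hBeq] at this
    exact this
  -- pointwise: I * h = c' * I
  have hIh : ∀ ω, I ω * h ω = c' * I ω := by
    intro ω
    rcases hI01 ω with h0 | h1
    · rw [h0]; ring
    · rw [h1, hconst ω h1]; ring
  -- A := {I = 1}
  set A : Set Ω := indCen S C i j ⁻¹' {1} with hAdef
  have hA_mI : MeasurableSet[(MeasurableSpace.comap (indCen S C i j) inferInstance)] A := ⟨{1}, measurableSet_singleton 1, rfl⟩
  have hA_m0 : MeasurableSet[m0] A := hI _ hA_mI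
  have hindA : ∀ (u : Ω → ℝ) ω, u ω * I ω = A.indicator u ω := by
    intro u ω
    by_cases hω : ω ∈ A
    · have : I ω = 1 := hω
      rw [this, Set.indicator_of_mem hω, mul_one]
    · have h1 : I ω ≠ 1 := hω
      have : I ω = 0 := (hI01 ω).resolve_right h1
      rw [this, Set.indicator_of_notMem hω, mul_zero]
  -- compute c' = (∫ Z I )/(∫ I)
  have hZI : ∫ ω, Z i j ω * I ω ∂P = c' * ∫ ω, I ω ∂P := by
    have e1 : ∫ ω, Z i j ω * I ω ∂P = ∫ ω in A, Z i j ω ∂P := by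
      rw [← integral_indicator hA_m0]
      exact integral_congr_ae (Eventually.of_forall fun ω => hindA (Z i j) ω)
    have e2 : ∫ ω in A, Z i j ω ∂P = ∫ ω in A, h ω ∂P :=
      (setIntegral_condExp hI hZint hA_mI).symm
    have e3 : ∫ ω in A, h ω ∂P = ∫ ω, c' * I ω ∂P := by
      rw [← integral_indicator hA_m0]
      refine integral_congr_ae (Eventually.of_forall fun ω => ?_)
      rw [← hindA h ω, mul_comm, hIh ω]
    rw [e1, e2, e3, integral_const_mul]
  have hc'c : c' = (∫ ω, Z i j ω * I ω ∂P) / ∫ ω, I ω ∂P := by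
    rw [hZI]; field_simp
  -- scalar computation for each coordinate
  have hcoord : ∀ k : Fin p,
      ∫ ω, (I ω * Z i j ω) * f i j ω k ∂P = c' * ∫ ω, I ω * f i j ω k ∂P := by
    intro k
    set gk : Ω → ℝ := fun ω => I ω * f i j ω k with hgkdef
    have hgk_sm : StronglyMeasurable[(obsSigma S C f i)] gk := by
      have := (EuclideanSpace.proj (𝕜 := ℝ) k).continuous.comp_stronglyMeasurable hg_sm
      exact this
    have hgkZ_int : Integrable (fun ω => gk ω * Z i j ω) P := by
      have := (EuclideanSpace.proj (𝕜 := ℝ) k).integrable_comp hint1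
      refine this.congr (Eventually.of_forall fun ω => ?_)
      show (I ω * Z i j ω) * f i j ω k = gk ω * Z i j ω
      rw [hgkdef]; ring
    have hstep1 : ∫ ω, gk ω * Z i j ω ∂P = ∫ ω, gk ω * (P[Z i j|(obsSigma S C f i)]) ω ∂P := by
      have hmul := condExp_mul_of_stronglyMeasurable_left (μ := P) (m := (obsSigma S C f i)) hgk_sm
        (by exact hgkZ_int) hZint
      calc ∫ ω, gk ω * Z i j ω ∂P
          = ∫ ω, (P[(fun ω => gk ω * Z i j ω)|(obsSigma S C f i)]) ω ∂P := (integral_condExp hO).symm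
        _ = ∫ ω, gk ω * (P[Z i j|(obsSigma S C f i)]) ω ∂P := integral_congr_ae hmul
    have hstep2 : ∫ ω, gk ω * (P[Z i j|(obsSigma S C f i)]) ω ∂P = ∫ ω, gk ω * h ω ∂P := by
      refine integral_congr_ae ((hBf j hj).mono fun ω hω => ?_)
      simp only at hω
      show gk ω * (P[Z i j|(obsSigma S C f i)]) ω = gk ω * h ω
      rw [hgkdef]
      have l1 : I ω * f i j ω k * (P[Z i j|(obsSigma S C f i)]) ω
          = f i j ω k * (indCen S C i j ω * (P[Z i j|(obsSigma S C f i)]) ω) := by rw [← hIdef]; ring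
      have l2 : I ω * f i j ω k * h ω
          = f i j ω k * (indCen S C i j ω * (P[Z i j|(MeasurableSpace.comap (indCen S C i j) inferInstance)]) ω) := by
        rw [← hIdef]; show _ = f i j ω k * (indCen S C i j ω * h ω); rw [← hIdef]; ring
      rw [l1, l2, hω]
    have hstep3 : ∫ ω, gk ω * h ω ∂P = c' * ∫ ω, gk ω ∂P := by
      rw [← integral_const_mul]
      refine integral_congr_ae (Eventually.of_forall fun ω => ?_)
      show gk ω * h ω = c' * gk ω
      rw [hgkdef]
      have : I ω * f i j ω k * h ω = f i j ω k * (I ω * h ω) := by ring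
      rw [this, hIh ω]; ring
    calc ∫ ω, (I ω * Z i j ω) * f i j ω k ∂P
        = ∫ ω, gk ω * Z i j ω ∂P := by
          refine integral_congr_ae (Eventually.of_forall fun ω => ?_)
          show (I ω * Z i j ω) * f i j ω k = gk ω * Z i j ω
          rw [hgkdef]; ring
      _ = c' * ∫ ω, gk ω ∂P := by rw [hstep1, hstep2, hstep3]
  -- assemble the vector identity
  rw [← hc'c]
  have hL : ∀ k : Fin p,
      EuclideanSpace.proj (𝕜 := ℝ) k (∫ ω, (I ω * Z i j ω) • f i j ω ∂P)
        = c' * EuclideanSpace.proj (𝕜 := ℝ) k (∫ ω, I ω • f i j ω ∂P) := by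
    intro k
    rw [← (EuclideanSpace.proj (𝕜 := ℝ) k).integral_comp_comm hint1,
      ← (EuclideanSpace.proj (𝕜 := ℝ) k).integral_comp_comm hint2]
    exact hcoord k
  have : ∀ k : Fin p,
      (∫ ω, (I ω * Z i j ω) • f i j ω ∂P) k
        = (c' • ∫ ω, I ω • f i j ω ∂P) k := by
    intro k
    have := hL k
    simpa using this
  exact PiLp.ext this
end
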